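/- Let T = (T_1,…,T_n) be a commuting tuple of contractions on H. If T is pure (i.e. T_i^{*m} h → 0 as m → ∞ for each i and each h ∈ H) and T satisfies Szegő positivity (i.e. ∑_{F ⊆ {1,…,n}} (−1)^{|F|} T_F T_F* ≥ 0), then T satisfies Brehmer positivity (i.e. ∑_{F ⊆ G} (−1)^{|F|} T_F T_F* ≥ 0 for every subset G of {1,…,n}). -/

import Mathlib

open ContinuousLinearMap Filter Topology

/-- For a tuple `S` of operators and a finite index set `F`, the product `S_F` of the
operators `S i`, `i ∈ F` (in increasing index order). -/
noncomputable def subProd {H : Type*} [NormedAddCommGroup H] [InnerProductSpace ℂ H]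
    {m : ℕ} (S : Fin m → (H →L[ℂ] H)) (F : Finset (Fin m)) : H →L[ℂ] H :=
  ((F.sort (· ≤ ·)).map S).prod

/-- The Brehmer defect operator `∑_{F ⊆ G} (−1)^{|F|} S_F S_F*`. -/
noncomputable def brehmerDefect {H : Type*} [NormedAddCommGroup H] [InnerProductSpace ℂ H]
    [CompleteSpace H] {m : ℕ} (S : Fin m → (H →L[ℂ] H)) (G : Finset (Fin m)) :
    H →L[ℂ] H :=
  ∑ F ∈ G.powerset, (-1 : ℂ) ^ F.card • (subProd S F * adjoint (subProd S F))

lemma pairwise_comm {H : Type*} [NormedAddCommGroup H] [InnerProductSpace ℂ H]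
    {m : ℕ} (S : Fin m → (H →L[ℂ] H)) (hcomm : ∀ i j, Commute (S i) (S j))
    (l : List (Fin m)) : (l.map S).Pairwise Commute := by
  induction l with
  | nil => simp
  | cons a l ih => simpa [List.pairwise_cons] using ⟨fun b _ => hcomm a b, ih⟩

lemma subProd_insert {H : Type*} [NormedAddCommGroup H] [InnerProductSpace ℂ H]
    {m : ℕ} (S : Fin m → (H →L[ℂ] H)) (hcomm : ∀ i j, Commute (S i) (S j))
    {F : Finset (Fin m)} {i : Fin m} (hi : i ∉ F) :
    subProd S (insert i F) = S i * subProd S F := by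
  have hperm : List.Perm ((insert i F).sort (· ≤ ·)) (i :: F.sort (· ≤ ·)) := by
    rw [← Multiset.coe_eq_coe, Finset.sort_eq, Finset.insert_val_of_notMem hi,
      ← Multiset.cons_coe, Finset.sort_eq]
  have := (hperm.map S).prod_eq' (pairwise_comm S hcomm _)
  simpa [subProd] using this

lemma brehmerDefect_selfAdjoint {H : Type*} [NormedAddCommGroup H] [InnerProductSpace ℂ H]
    [CompleteSpace H] {m : ℕ} (S : Fin m → (H →L[ℂ] H)) (G : Finset (Fin m)) :
    IsSelfAdjoint (brehmerDefect S G) := by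
  rw [IsSelfAdjoint, brehmerDefect]
  rw [star_sum]
  refine Finset.sum_congr rfl fun F _ => ?_
  rw [star_smul, star_mul, star_eq_adjoint, star_eq_adjoint, adjoint_adjoint]
  congr 1
  simp

lemma brehmerDefect_insert {H : Type*} [NormedAddCommGroup H] [InnerProductSpace ℂ H]
    [CompleteSpace H] {m : ℕ} (S : Fin m → (H →L[ℂ] H))
    (hcomm : ∀ i j, Commute (S i) (S j)) {G : Finset (Fin m)} {i : Fin m} (hi : i ∉ G) :
    brehmerDefect S (insert i G)
      = brehmerDefect S G - S i * brehmerDefect S G * adjoint (S i) := by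
  classical
  have hdisj : Disjoint G.powerset (G.powerset.image (insert i)) := by
    rw [Finset.disjoint_right]
    intro F hF hF'
    rcases Finset.mem_image.mp hF with ⟨F', hF'', rfl⟩
    exact hi ((Finset.mem_powerset.mp hF') (Finset.mem_insert_self i F'))
  have hinj : Set.InjOn (insert i) (G.powerset : Set (Finset (Fin m))) := by
    intro a ha b hb hab
    have hia : i ∉ a := fun h => hi (Finset.mem_powerset.mp ha h)
    have hib : i ∉ b := fun h => hi (Finset.mem_powerset.mp hb h)
    rw [← Finset.erase_insert hia, ← Finset.erase_insert hib, hab]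
  rw [brehmerDefect, Finset.powerset_insert, Finset.sum_union hdisj,
    Finset.sum_image hinj]
  have key : ∀ F ∈ G.powerset,
      (-1 : ℂ) ^ (insert i F).card • (subProd S (insert i F) * adjoint (subProd S (insert i F)))
      = -((-1 : ℂ) ^ F.card • (S i * (subProd S F * adjoint (subProd S F)) * adjoint (S i))) := by
    intro F hF
    have hiF : i ∉ F := fun h => hi (Finset.mem_powerset.mp hF h)
    have hadj : adjoint (S i * subProd S F) = adjoint (subProd S F) * adjoint (S i) :=
      adjoint_comp (S i) (subProd S F)
    rw [subProd_insert S hcomm hiF, Finset.card_insert_of_notMem hiF, hadj, pow_succ]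
    simp [mul_smul, mul_assoc]
  rw [Finset.sum_congr rfl key]
  have hexp : S i * brehmerDefect S G * adjoint (S i)
      = ∑ F ∈ G.powerset,
        (-1 : ℂ) ^ F.card • (S i * (subProd S F * adjoint (subProd S F)) * adjoint (S i)) := by
    rw [brehmerDefect, Finset.mul_sum, Finset.sum_mul]
    refine Finset.sum_congr rfl fun F _ => ?_
    rw [mul_smul_comm, smul_mul_assoc]
  rw [hexp, Finset.sum_neg_distrib, brehmerDefect, sub_eq_add_neg]

lemma pos_of_insert {H : Type*} [NormedAddCommGroup H] [InnerProductSpace ℂ H]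
    [CompleteSpace H] {m : ℕ} (S : Fin m → (H →L[ℂ] H))
    (hcomm : ∀ i j, Commute (S i) (S j)) {G : Finset (Fin m)} {i : Fin m} (hi : i ∉ G)
    (hpure : ∀ h : H, Tendsto (fun k : ℕ => ((adjoint (S i)) ^ k) h) atTop (𝓝 0))
    (hB : (brehmerDefect S (insert i G)).IsPositive) :
    (brehmerDefect S G).IsPositive := by
  set A := brehmerDefect S G with hA
  set B := brehmerDefect S (insert i G) with hBdef
  have hrel : ∀ y : H, A y = B y + (S i) (A (adjoint (S i) y)) := by
    intro y
    have : B = A - S i * A * adjoint (S i) := brehmerDefect_insert S hcomm hi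
    rw [this]
    simp [mul_apply]
  refine ⟨(brehmerDefect_selfAdjoint S G).isSymmetric, fun x => ?_⟩
  set f : ℕ → ℝ := fun k => A.reApplyInnerSelf (((adjoint (S i)) ^ k) x) with hf
  have hstep : ∀ k, f (k + 1) ≤ f k := by
    intro k
    set y := ((adjoint (S i)) ^ k) x with hy
    have hy1 : ((adjoint (S i)) ^ (k + 1)) x = adjoint (S i) y := by
      rw [pow_succ']; rfl
    have h1 : f k = B.reApplyInnerSelf y + f (k + 1) := by
      simp only [hf, hy1, ← hy, reApplyInnerSelf, hrel y, inner_add_left, map_add]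
      congr 1
      congr 1
      rw [← adjoint_inner_right]
    rw [h1]
    have := hB.2 y
    linarith
  have hmono : Antitone f := antitone_nat_of_succ_le hstep
  have hlim : Tendsto f atTop (𝓝 0) := by
    have h0 : Tendsto (fun k : ℕ => ((adjoint (S i)) ^ k) x) atTop (𝓝 0) := hpure x
    have hAx : Tendsto (fun k : ℕ => A (((adjoint (S i)) ^ k) x)) atTop (𝓝 0) := by
      have := (A.continuous.tendsto 0).comp h0
      simpa [Function.comp_def] using this
    have hinner : Tendsto (fun k : ℕ =>
        (@inner ℂ H _ (A (((adjoint (S i)) ^ k) x)) (((adjoint (S i)) ^ k) x)))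
        atTop (𝓝 (0 : ℂ)) := by
      have h2 : Tendsto (fun k : ℕ =>
          (@inner ℂ H _ (A (((adjoint (S i)) ^ k) x)) (((adjoint (S i)) ^ k) x)))
          atTop (𝓝 (@inner ℂ H _ (0 : H) (0 : H))) := hAx.inner h0
      simpa using h2
    have := (Complex.continuous_re.tendsto 0).comp hinner
    simpa [hf, reApplyInnerSelf, Function.comp_def] using this
  have h0le : (0 : ℝ) ≤ f 0 := le_of_tendsto hlim (Eventually.of_forall fun k => hmono (Nat.zero_le k))
  simpa [hf] using h0le


/-- A pure commuting tuple of contractions satisfying Szegő positivity satisfies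
Brehmer positivity. -/
theorem brehmer_of_pure_szego {H : Type*} [NormedAddCommGroup H]
    [InnerProductSpace ℂ H] [CompleteSpace H] {n : ℕ} (T : Fin n → (H →L[ℂ] H))
    (hcomm : ∀ i j, Commute (T i) (T j)) (hcontr : ∀ i, ‖T i‖ ≤ 1)
    (hpure : ∀ (i : Fin n) (h : H),
      Tendsto (fun m : ℕ => ((adjoint (T i)) ^ m) h) atTop (𝓝 0))
    (hszego : (brehmerDefect T Finset.univ).IsPositive) :
    ∀ G : Finset (Fin n), (brehmerDefect T G).IsPositive := by
  have key : ∀ k : ℕ, ∀ G : Finset (Fin n), Gᶜ.card ≤ k → (brehmerDefect T G).IsPositive := by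
    intro k
    induction k with
    | zero =>
      intro G hG
      have h1 : Gᶜ = ∅ := Finset.card_eq_zero.mp (le_antisymm hG (Nat.zero_le _))
      have h2 : G = Finset.univ := by
        rwa [Finset.compl_eq_empty_iff] at h1
      rw [h2]; exact hszego
    | succ k ih =>
      intro G hG
      by_cases hG' : G = Finset.univ
      · rw [hG']; exact hszego
      · obtain ⟨i, hi⟩ : ∃ i, i ∉ G := by
          by_contra h
          push_neg at h
          exact hG' (Finset.eq_univ_iff_forall.mpr h)
        refine pos_of_insert T hcomm hi (hpure i) (ih (insert i G) ?_)
        have hic : i ∈ Gᶜ := Finset.mem_compl.mpr hi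
        have hpos : 1 ≤ Gᶜ.card := Finset.card_pos.mpr ⟨i, hic⟩
        rw [Finset.compl_insert, Finset.card_erase_of_mem hic]
        omega
  exact fun G => key Gᶜ.card G le_rfl
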